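/- With the coface maps of the complex C_X^*(A,m) as above (C cocommutative, X a right C-comodule, m : C → Hom(A⊗A,A) convolution-associative), the cosimplicial identity d_1^{n+1} ∘ d_0^n = d_0^{n+1} ∘ d_0^n holds. -/

import Mathlib

open TensorProduct PiTensorProduct

noncomputable section

namespace DefCx

variable {k : Type*} [Field k]
variable {A : Type*} [AddCommGroup A] [Module k A]

/-- Cast between tensor powers of `A` with equal exponents. -/
def tcastA {a b : ℕ} (h : a = b) : (⨂[k] (_ : Fin a), A) ≃ₗ[k] ⨂[k] (_ : Fin b), A :=
  PiTensorProduct.reindex k (fun _ => A) (finCongr h)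

/-- `A^{⊗1} ≃ A`. -/
def oneE : (⨂[k] (_ : Fin 1), A) ≃ₗ[k] A := PiTensorProduct.subsingletonEquiv 0

/-- `A^{⊗a} ⊗ A^{⊗b} ≃ A^{⊗(a+b)}`. -/
def glueA (a b : ℕ) :
    ((⨂[k] (_ : Fin a), A) ⊗[k] (⨂[k] (_ : Fin b), A)) ≃ₗ[k] ⨂[k] (_ : Fin (a + b)), A :=
  (PiTensorProduct.tmulEquiv k A).trans (PiTensorProduct.reindex k (fun _ => A) finSumFinEquiv)

/-- Splitting off the first tensorand: `A^{⊗(n+1)} ≃ A ⊗ A^{⊗n}`. -/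
def splitFirst (n : ℕ) :
    (⨂[k] (_ : Fin (n + 1)), A) ≃ₗ[k] A ⊗[k] (⨂[k] (_ : Fin n), A) :=
  (((TensorProduct.congr (oneE (k := k) (A := A)).symm (LinearEquiv.refl k _)).trans
    (glueA 1 n)).trans (tcastA (by omega))).symm

/-- Splitting off the last tensorand: `A^{⊗(n+1)} ≃ A^{⊗n} ⊗ A`. -/
def splitLast (n : ℕ) :
    (⨂[k] (_ : Fin (n + 1)), A) ≃ₗ[k] (⨂[k] (_ : Fin n), A) ⊗[k] A :=
  ((TensorProduct.congr (LinearEquiv.refl k _) (oneE (k := k) (A := A)).symm).trans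
    (glueA n 1)).symm

/-- `A ⊗ A ≃ A^{⊗2}`. -/
def pairE : (A ⊗[k] A) ≃ₗ[k] ⨂[k] (_ : Fin 2), A :=
  (TensorProduct.congr (oneE (k := k) (A := A)).symm (oneE (k := k) (A := A)).symm).trans
    (glueA 1 1)

/-- `A^{⊗(a+2+b)} ≃ (A^{⊗a} ⊗ (A⊗A)) ⊗ A^{⊗b}`. -/
def midSplit (a b : ℕ) :
    (⨂[k] (_ : Fin (a + 2 + b)), A) ≃ₗ[k]
      ((⨂[k] (_ : Fin a), A) ⊗[k] (A ⊗[k] A)) ⊗[k] (⨂[k] (_ : Fin b), A) :=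
  (((TensorProduct.congr (TensorProduct.congr (LinearEquiv.refl k _)
      (pairE (k := k) (A := A))) (LinearEquiv.refl k _)).trans
    (TensorProduct.congr (glueA a 2) (LinearEquiv.refl k _))).trans (glueA (a + 2) b)).symm

/-- `(A^{⊗a} ⊗ A) ⊗ A^{⊗b} ≃ A^{⊗(a+1+b)}`. -/
def midAssemble (a b : ℕ) :
    (((⨂[k] (_ : Fin a), A) ⊗[k] A) ⊗[k] (⨂[k] (_ : Fin b), A)) ≃ₗ[k]
      ⨂[k] (_ : Fin (a + 1 + b)), A :=
  ((TensorProduct.congr (TensorProduct.congr (LinearEquiv.refl k _)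
      (oneE (k := k) (A := A)).symm) (LinearEquiv.refl k _)).trans
    (TensorProduct.congr (glueA a 1) (LinearEquiv.refl k _))).trans (glueA (a + 1) b)

/-- Apply `g : A ⊗ A → A` to the tensorands in positions `a+1, a+2` of `A^{⊗(a+2+b)}`:
this is `id^{⊗a} ⊗ g ⊗ id^{⊗b}`. -/
def insertMul (a b : ℕ) (g : A ⊗[k] A →ₗ[k] A) :
    (⨂[k] (_ : Fin (a + 2 + b)), A) →ₗ[k] ⨂[k] (_ : Fin (a + 1 + b)), A :=
  (midAssemble a b).toLinearMap ∘ₗ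
    LinearMap.rTensor _ (LinearMap.lTensor _ g) ∘ₗ (midSplit a b).toLinearMap

variable {C : Type*} [AddCommGroup C] [Module k C] [Coalgebra k C]
variable {X : Type*} [AddCommGroup X] [Module k X]

/-- The 0-th coface map `d_0^n(ν)(x) = Σ m(x₍1₎) ∘ (A ⊗ ν(x₍0₎))`. -/
def d0 (ρ : X →ₗ[k] X ⊗[k] C) (m : C →ₗ[k] (A ⊗[k] A →ₗ[k] A)) (n : ℕ)
    (ν : X →ₗ[k] ((⨂[k] (_ : Fin n), A) →ₗ[k] A)) :
    X →ₗ[k] ((⨂[k] (_ : Fin (n + 1)), A) →ₗ[k] A) :=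
  TensorProduct.lift (LinearMap.mk₂ k
    (fun x c => (m c) ∘ₗ LinearMap.lTensor A (ν x) ∘ₗ (splitFirst n).toLinearMap)
    (by intro x y c
        simp [map_add, LinearMap.lTensor_add, LinearMap.comp_add, LinearMap.add_comp])
    (by intro a x c
        simp [map_smul, LinearMap.lTensor_smul, LinearMap.comp_smul, LinearMap.smul_comp])
    (by intro x c c'
        simp [map_add, LinearMap.add_comp])
    (by intro a x c
        simp [map_smul, LinearMap.smul_comp])) ∘ₗ ρ

/-- The last coface map `d_{n+1}^n(ν)(x) = Σ m(x₍1₎) ∘ (ν(x₍0₎) ⊗ A)`. -/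
def dlast (ρ : X →ₗ[k] X ⊗[k] C) (m : C →ₗ[k] (A ⊗[k] A →ₗ[k] A)) (n : ℕ)
    (ν : X →ₗ[k] ((⨂[k] (_ : Fin n), A) →ₗ[k] A)) :
    X →ₗ[k] ((⨂[k] (_ : Fin (n + 1)), A) →ₗ[k] A) :=
  TensorProduct.lift (LinearMap.mk₂ k
    (fun x c => (m c) ∘ₗ LinearMap.rTensor A (ν x) ∘ₗ (splitLast n).toLinearMap)
    (by intro x y c
        simp [map_add, LinearMap.rTensor_add, LinearMap.comp_add, LinearMap.add_comp])
    (by intro a x c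
        simp [map_smul, LinearMap.rTensor_smul, LinearMap.comp_smul, LinearMap.smul_comp])
    (by intro x c c'
        simp [map_add, LinearMap.add_comp])
    (by intro a x c
        simp [map_smul, LinearMap.smul_comp])) ∘ₗ ρ

/-- The middle coface maps
`d_i^n(ν)(x) = Σ ν(x₍0₎) ∘ (A^{⊗(i-1)} ⊗ m(x₍1₎) ⊗ A^{⊗(n-i)})`, with `a = i - 1`,
`b = n - i`. -/
def dmid (ρ : X →ₗ[k] X ⊗[k] C) (m : C →ₗ[k] (A ⊗[k] A →ₗ[k] A)) (a b : ℕ)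
    (ν : X →ₗ[k] ((⨂[k] (_ : Fin (a + 1 + b)), A) →ₗ[k] A)) :
    X →ₗ[k] ((⨂[k] (_ : Fin (a + 2 + b)), A) →ₗ[k] A) :=
  TensorProduct.lift (LinearMap.mk₂ k
    (fun x c => (ν x) ∘ₗ insertMul a b (m c))
    (by intro x y c
        simp [map_add, LinearMap.add_comp])
    (by intro r x c
        simp [map_smul, LinearMap.smul_comp])
    (by intro x c c'
        simp [insertMul, map_add, LinearMap.lTensor_add, LinearMap.rTensor_add,
          LinearMap.comp_add, LinearMap.add_comp])
    (by intro r x c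
        simp [insertMul, map_smul, LinearMap.lTensor_smul, LinearMap.rTensor_smul,
          LinearMap.comp_smul, LinearMap.smul_comp])) ∘ₗ ρ

/-- The `i`-th middle coface map at cochain degree `n`, recast to live on `A^{⊗(n+1)}`. -/
def dmidCast (ρ : X →ₗ[k] X ⊗[k] C) (m : C →ₗ[k] (A ⊗[k] A →ₗ[k] A)) (n : ℕ) (i : Fin n)
    (ν : X →ₗ[k] ((⨂[k] (_ : Fin n), A) →ₗ[k] A)) :
    X →ₗ[k] ((⨂[k] (_ : Fin (n + 1)), A) →ₗ[k] A) :=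
  have hi : (i : ℕ) < n := i.isLt
  (LinearMap.lcomp k A (tcastA (show n + 1 = (i : ℕ) + 2 + (n - 1 - (i : ℕ)) by
      omega)).toLinearMap) ∘ₗ
    dmid ρ m (i : ℕ) (n - 1 - (i : ℕ))
      ((LinearMap.lcomp k A (tcastA (show (i : ℕ) + 1 + (n - 1 - (i : ℕ)) = n by
        omega)).toLinearMap) ∘ₗ ν)

/-- The differential `d_X^n = Σ_{i=0}^{n+1} (−1)^i d_i^n` of the complex `C_X^*(A, m)`. -/
def dX (ρ : X →ₗ[k] X ⊗[k] C) (m : C →ₗ[k] (A ⊗[k] A →ₗ[k] A)) (n : ℕ)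
    (ν : X →ₗ[k] ((⨂[k] (_ : Fin n), A) →ₗ[k] A)) :
    X →ₗ[k] ((⨂[k] (_ : Fin (n + 1)), A) →ₗ[k] A) :=
  d0 ρ m n ν + ((-1 : ℤ) ^ (n + 1)) • dlast ρ m n ν +
    ∑ i : Fin n, ((-1 : ℤ) ^ ((i : ℕ) + 1)) • dmidCast ρ m n i ν

/-- Convolution-associativity of `m : C → Hom(A⊗A, A)`:
`Σ m(c₍₁₎)∘(m(c₍₂₎)⊗A) = Σ m(c₍₁₎)∘(A⊗m(c₍₂₎))` as maps `(A⊗A)⊗A → A`. -/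
def ConvAssoc (m : C →ₗ[k] (A ⊗[k] A →ₗ[k] A)) : Prop :=
  TensorProduct.lift (LinearMap.mk₂ k
      (fun c c' => (m c) ∘ₗ LinearMap.rTensor A (m c'))
      (by intro x y c; simp [map_add, LinearMap.add_comp])
      (by intro r x c; simp [map_smul, LinearMap.smul_comp])
      (by intro x c c'
          simp [map_add, LinearMap.rTensor_add, LinearMap.comp_add])
      (by intro r x c
          simp [map_smul, LinearMap.rTensor_smul, LinearMap.comp_smul])) ∘ₗ
    (Coalgebra.comul : C →ₗ[k] C ⊗[k] C) =
  TensorProduct.lift (LinearMap.mk₂ k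
      (fun c c' => (m c) ∘ₗ LinearMap.lTensor A (m c') ∘ₗ
        (TensorProduct.assoc k A A A).toLinearMap)
      (by intro x y c; simp [map_add, LinearMap.add_comp])
      (by intro r x c; simp [map_smul, LinearMap.smul_comp])
      (by intro x c c'
          simp [map_add, LinearMap.lTensor_add, LinearMap.comp_add, LinearMap.add_comp])
      (by intro r x c
          simp [map_smul, LinearMap.lTensor_smul, LinearMap.comp_smul,
            LinearMap.smul_comp])) ∘ₗ
    (Coalgebra.comul : C →ₗ[k] C ⊗[k] C)

end DefCx

end
section Aux
open DefCx TensorProduct PiTensorProduct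
variable {k : Type*} [Field k]
variable {A : Type*} [AddCommGroup A] [Module k A]

lemma splitFirst_tprod (n : ℕ) (f : Fin (n+1) → A) :
    splitFirst (k := k) n (tprod k f) = f 0 ⊗ₜ[k] tprod k (fun i => f i.succ) := by
  simp [splitFirst, glueA, tcastA, oneE, LinearEquiv.trans_apply, reindex_symm, reindex_tprod]
  congr 1

noncomputable def Pn (n : ℕ) :
    (⨂[k] (_ : Fin (n + 2)), A) ≃ₗ[k] (A ⊗[k] A) ⊗[k] (⨂[k] (_ : Fin n), A) :=
  (((TensorProduct.congr (pairE (k := k) (A := A)) (LinearEquiv.refl k _)).trans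
    (glueA 2 n)).trans (tcastA (by omega))).symm
lemma Pn_tprod (n : ℕ) (f : Fin (n+2) → A) :
    Pn (k := k) n (tprod k f) = (f 0 ⊗ₜ[k] f 1) ⊗ₜ[k] tprod k (fun i => f i.succ.succ) := by
  simp [Pn, glueA, tcastA, pairE, oneE, LinearEquiv.trans_apply, reindex_symm, reindex_tprod]
  congr 1

lemma key1 (n : ℕ) (g : A ⊗[k] A →ₗ[k] A) :
    (splitFirst (k := k) n).toLinearMap ∘ₗ
        (tcastA (show 0 + 1 + (n + 1 - 1 - 0) = n + 1 by omega)).toLinearMap ∘ₗ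
        insertMul 0 (n + 1 - 1 - 0) g ∘ₗ
        (tcastA (show n + 1 + 1 = 0 + 2 + (n + 1 - 1 - 0) by omega)).toLinearMap
      = LinearMap.rTensor _ g ∘ₗ (Pn n).toLinearMap := by
  ext f
  simp [insertMul, midSplit, midAssemble, Pn_tprod, splitFirst_tprod, glueA, tcastA, pairE, oneE,
    LinearEquiv.trans_apply, reindex_symm, reindex_tprod, finSumFinEquiv, Fin.addCases]
  congr 1
  refine congrArg (⇑(PiTensorProduct.tprod (s := fun _ : Fin n => A) k)) (funext fun i => congrArg f ?_)
  ext
  simp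

lemma key2 (n : ℕ) :
    LinearMap.lTensor A (splitFirst (k := k) n).toLinearMap ∘ₗ
        (splitFirst (n + 1)).toLinearMap
      = (TensorProduct.assoc k A A _).toLinearMap ∘ₗ (Pn n).toLinearMap := by
  ext f
  simp [splitFirst_tprod, Pn_tprod]
end Aux

section Aux2
open DefCx TensorProduct PiTensorProduct
variable {k : Type*} [Field k]
variable {A : Type*} [AddCommGroup A] [Module k A]
variable {C : Type*} [AddCommGroup C] [Module k C] [Coalgebra k C]
variable {X : Type*} [AddCommGroup X] [Module k X]

/-- `Σ m(c)∘(m(c')⊗A)` as a map on `C ⊗ C`. -/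
noncomputable def liftL (m : C →ₗ[k] (A ⊗[k] A →ₗ[k] A)) :
    C ⊗[k] C →ₗ[k] ((A ⊗[k] A) ⊗[k] A →ₗ[k] A) :=
  TensorProduct.lift (LinearMap.mk₂ k
    (fun c c' => (m c) ∘ₗ LinearMap.rTensor A (m c'))
    (by intros; simp [map_add, LinearMap.add_comp])
    (by intros; simp [map_smul, LinearMap.smul_comp])
    (by intros; simp [map_add, LinearMap.rTensor_add, LinearMap.comp_add])
    (by intros; simp [map_smul, LinearMap.rTensor_smul, LinearMap.comp_smul]))

noncomputable def liftR' (m : C →ₗ[k] (A ⊗[k] A →ₗ[k] A)) :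
    C ⊗[k] C →ₗ[k] ((A ⊗[k] A) ⊗[k] A →ₗ[k] A) :=
  TensorProduct.lift (LinearMap.mk₂ k
    (fun c c' => (m c) ∘ₗ LinearMap.lTensor A (m c') ∘ₗ (TensorProduct.assoc k A A A).toLinearMap)
    (by intros; simp [map_add, LinearMap.add_comp])
    (by intros; simp [map_smul, LinearMap.smul_comp])
    (by intros; simp [map_add, LinearMap.lTensor_add, LinearMap.comp_add, LinearMap.add_comp])
    (by intros; simp [map_smul, LinearMap.lTensor_smul, LinearMap.comp_smul, LinearMap.smul_comp]))

noncomputable def liftR (m : C →ₗ[k] (A ⊗[k] A →ₗ[k] A)) :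
    C ⊗[k] C →ₗ[k] ((A ⊗[k] A) ⊗[k] A →ₗ[k] A) :=
  liftR' m ∘ₗ (TensorProduct.comm k C C).toLinearMap

lemma liftL_comul_eq_liftR_comul (m : C →ₗ[k] (A ⊗[k] A →ₗ[k] A)) (hm : ConvAssoc m)
    (hcocomm : (TensorProduct.comm k C C).toLinearMap ∘ₗ
      (Coalgebra.comul : C →ₗ[k] C ⊗[k] C) = Coalgebra.comul) :
    liftL (A := A) m ∘ₗ (Coalgebra.comul : C →ₗ[k] C ⊗[k] C) =
      liftR (A := A) m ∘ₗ (Coalgebra.comul : C →ₗ[k] C ⊗[k] C) := by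
  have h1 : liftL (A := A) m ∘ₗ (Coalgebra.comul : C →ₗ[k] C ⊗[k] C) =
      liftR' (A := A) m ∘ₗ (Coalgebra.comul : C →ₗ[k] C ⊗[k] C) := hm
  rw [h1, liftR, LinearMap.comp_assoc, hcocomm]

/-- The bilinear lift underlying `d0`. -/
noncomputable def innerD (m : C →ₗ[k] (A ⊗[k] A →ₗ[k] A)) (n : ℕ)
    (ν : X →ₗ[k] ((⨂[k] (_ : Fin n), A) →ₗ[k] A)) :
    X ⊗[k] C →ₗ[k] ((⨂[k] (_ : Fin (n + 1)), A) →ₗ[k] A) :=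
  TensorProduct.lift (LinearMap.mk₂ k
    (fun x c => (m c) ∘ₗ LinearMap.lTensor A (ν x) ∘ₗ (splitFirst n).toLinearMap)
    (by intro x y c
        simp [map_add, LinearMap.lTensor_add, LinearMap.comp_add, LinearMap.add_comp])
    (by intro a x c
        simp [map_smul, LinearMap.lTensor_smul, LinearMap.comp_smul, LinearMap.smul_comp])
    (by intro x c c'
        simp [map_add, LinearMap.add_comp])
    (by intro a x c
        simp [map_smul, LinearMap.smul_comp]))

lemma d0_eq (ρ : X →ₗ[k] X ⊗[k] C) (m : C →ₗ[k] (A ⊗[k] A →ₗ[k] A)) (n : ℕ)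
    (ν : X →ₗ[k] ((⨂[k] (_ : Fin n), A) →ₗ[k] A)) :
    d0 ρ m n ν = innerD m n ν ∘ₗ ρ := rfl

noncomputable def PsiL (m : C →ₗ[k] (A ⊗[k] A →ₗ[k] A)) (n : ℕ)
    (ν : X →ₗ[k] ((⨂[k] (_ : Fin n), A) →ₗ[k] A)) :
    (X ⊗[k] C) ⊗[k] C →ₗ[k] ((⨂[k] (_ : Fin (n + 1 + 1)), A) →ₗ[k] A) :=
  TensorProduct.lift (LinearMap.mk₂ k
    (fun w c => ((innerD m n ν w ∘ₗ
        (tcastA (show 0 + 1 + (n + 1 - 1 - 0) = n + 1 by omega)).toLinearMap) ∘ₗ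
        insertMul 0 (n + 1 - 1 - 0) (m c)) ∘ₗ
        (tcastA (show n + 1 + 1 = 0 + 2 + (n + 1 - 1 - 0) by omega)).toLinearMap)
    (by intro x y c; simp [map_add, LinearMap.add_comp])
    (by intro r x c; simp [map_smul, LinearMap.smul_comp])
    (by intro w c c'
        simp [insertMul, map_add, LinearMap.lTensor_add, LinearMap.rTensor_add,
          LinearMap.comp_add, LinearMap.add_comp])
    (by intro r w c
        simp [insertMul, map_smul, LinearMap.lTensor_smul, LinearMap.rTensor_smul,
          LinearMap.comp_smul, LinearMap.smul_comp]))

noncomputable def PsiR (m : C →ₗ[k] (A ⊗[k] A →ₗ[k] A)) (n : ℕ)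
    (ν : X →ₗ[k] ((⨂[k] (_ : Fin n), A) →ₗ[k] A)) :
    (X ⊗[k] C) ⊗[k] C →ₗ[k] ((⨂[k] (_ : Fin (n + 1 + 1)), A) →ₗ[k] A) :=
  TensorProduct.lift (LinearMap.mk₂ k
    (fun w c => (m c) ∘ₗ LinearMap.lTensor A (innerD m n ν w) ∘ₗ
        (splitFirst (n + 1)).toLinearMap)
    (by intro x y c
        simp [map_add, LinearMap.lTensor_add, LinearMap.comp_add, LinearMap.add_comp])
    (by intro r x c
        simp [map_smul, LinearMap.lTensor_smul, LinearMap.comp_smul, LinearMap.smul_comp])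
    (by intro w c c'; simp [map_add, LinearMap.add_comp])
    (by intro r w c; simp [map_smul, LinearMap.smul_comp]))

noncomputable def SLR (L : C ⊗[k] C →ₗ[k] ((A ⊗[k] A) ⊗[k] A →ₗ[k] A)) (n : ℕ)
    (ν : X →ₗ[k] ((⨂[k] (_ : Fin n), A) →ₗ[k] A)) :
    X ⊗[k] (C ⊗[k] C) →ₗ[k] ((⨂[k] (_ : Fin (n + 1 + 1)), A) →ₗ[k] A) :=
  TensorProduct.lift (LinearMap.mk₂ k
    (fun y z => (L z) ∘ₗ LinearMap.lTensor (A ⊗[k] A) (ν y) ∘ₗ (Pn n).toLinearMap)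
    (by intro x y c
        simp [map_add, LinearMap.lTensor_add, LinearMap.comp_add, LinearMap.add_comp])
    (by intro r x c
        simp [map_smul, LinearMap.lTensor_smul, LinearMap.comp_smul, LinearMap.smul_comp])
    (by intro w c c'; simp [map_add, LinearMap.add_comp])
    (by intro r w c; simp [map_smul, LinearMap.smul_comp]))

lemma claimA (ρ : X →ₗ[k] X ⊗[k] C) (m : C →ₗ[k] (A ⊗[k] A →ₗ[k] A)) (n : ℕ)
    (ν : X →ₗ[k] ((⨂[k] (_ : Fin n), A) →ₗ[k] A)) :
    dmidCast ρ m (n + 1) (⟨0, Nat.succ_pos n⟩ : Fin (n + 1)) (d0 ρ m n ν) =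
      PsiL m n ν ∘ₗ LinearMap.rTensor C ρ ∘ₗ ρ := by
  ext x : 1
  simp only [dmidCast, dmid, d0_eq, LinearMap.comp_apply, LinearMap.lcomp_apply,
    LinearMap.rTensor, PsiL]
  generalize ρ x = w
  induction w using TensorProduct.induction_on with
  | zero => simp
  | tmul y c => simp [LinearMap.lcomp_apply', LinearMap.comp_assoc]
  | add u v hu hv => simp only [map_add, LinearMap.add_comp, LinearMap.comp_add, hu, hv]

lemma claimB (ρ : X →ₗ[k] X ⊗[k] C) (m : C →ₗ[k] (A ⊗[k] A →ₗ[k] A)) (n : ℕ)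
    (ν : X →ₗ[k] ((⨂[k] (_ : Fin n), A) →ₗ[k] A)) :
    d0 ρ m (n + 1) (d0 ρ m n ν) = PsiR m n ν ∘ₗ LinearMap.rTensor C ρ ∘ₗ ρ := by
  ext x : 1
  simp only [d0, d0_eq, LinearMap.comp_apply, LinearMap.rTensor, PsiR]
  generalize ρ x = w
  induction w using TensorProduct.induction_on with
  | zero => simp
  | tmul y c => rfl
  | add u v hu hv => simp only [map_add, LinearMap.add_comp, LinearMap.comp_add, hu, hv]

end Aux2

section Aux3
open DefCx TensorProduct PiTensorProduct
variable {k : Type*} [Field k]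
variable {A : Type*} [AddCommGroup A] [Module k A]
variable {C : Type*} [AddCommGroup C] [Module k C] [Coalgebra k C]
variable {X : Type*} [AddCommGroup X] [Module k X]

lemma claimC (m : C →ₗ[k] (A ⊗[k] A →ₗ[k] A)) (n : ℕ)
    (ν : X →ₗ[k] ((⨂[k] (_ : Fin n), A) →ₗ[k] A)) :
    PsiL (A := A) m n ν = SLR (liftL m) n ν ∘ₗ (TensorProduct.assoc k X C C).toLinearMap := by
  apply TensorProduct.ext_threefold
  intro x c c'
  apply LinearMap.ext; intro z
  have h := LinearMap.congr_fun (key1 (k := k) (A := A) n (m c')) z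
  simp only [LinearMap.comp_apply, LinearEquiv.coe_coe] at h ⊢
  simp only [PsiL, SLR, innerD, liftL, TensorProduct.lift.tmul, LinearMap.mk₂_apply,
    TensorProduct.assoc_tmul, LinearMap.comp_apply, LinearEquiv.coe_coe]
  rw [h]
  simp only [← LinearMap.comp_apply, LinearMap.lTensor_comp_rTensor,
    LinearMap.rTensor_comp_lTensor]

lemma claimD (m : C →ₗ[k] (A ⊗[k] A →ₗ[k] A)) (n : ℕ)
    (ν : X →ₗ[k] ((⨂[k] (_ : Fin n), A) →ₗ[k] A)) :
    PsiR (A := A) m n ν = SLR (liftR m) n ν ∘ₗ (TensorProduct.assoc k X C C).toLinearMap := by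
  apply TensorProduct.ext_threefold
  intro x c c'
  apply LinearMap.ext; intro z
  have h := LinearMap.congr_fun (key2 (k := k) (A := A) n) z
  simp only [LinearMap.comp_apply, LinearEquiv.coe_coe] at h ⊢
  simp only [PsiR, SLR, innerD, liftR, liftR', TensorProduct.lift.tmul, LinearMap.mk₂_apply,
    TensorProduct.assoc_tmul, TensorProduct.comm_tmul, LinearMap.comp_apply,
    LinearEquiv.coe_coe, LinearMap.lTensor_comp, LinearMap.comp_apply]
  rw [h]
  have h3 := TensorProduct.map_map_assoc (LinearMap.id (M := A)) (LinearMap.id (M := A))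
    (ν x) (Pn (k := k) n z)
  simp only [LinearMap.lTensor, TensorProduct.map_id] at h3 ⊢
  rw [h3]

end Aux3

open DefCx in
/-- With the coface maps of the complex `C_X^*(A,m)` (for `C` cocommutative,
`X` a right `C`-comodule and `m` convolution-associative), the cosimplicial identity
`d_1^{n+1} ∘ d_0^n = d_0^{n+1} ∘ d_0^n` holds. Here `d_1^{n+1}` is the middle coface map
at position `1` (i.e. `dmidCast` with index `0`). -/
theorem coface_d1_d0_eq_d0_d0 {k : Type*} [Field k] {A C X : Type*}
    [AddCommGroup A] [Module k A]
    [AddCommGroup C] [Module k C] [Coalgebra k C]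
    [AddCommGroup X] [Module k X]
    (hcocomm : (TensorProduct.comm k C C).toLinearMap ∘ₗ
      (Coalgebra.comul : C →ₗ[k] C ⊗[k] C) = Coalgebra.comul)
    (ρ : X →ₗ[k] X ⊗[k] C)
    (hcoassoc : (TensorProduct.assoc k X C C).toLinearMap ∘ₗ LinearMap.rTensor C ρ ∘ₗ ρ =
      LinearMap.lTensor X (Coalgebra.comul : C →ₗ[k] C ⊗[k] C) ∘ₗ ρ)
    (hcounit : (TensorProduct.rid k X).toLinearMap ∘ₗ
      LinearMap.lTensor X (Coalgebra.counit : C →ₗ[k] k) ∘ₗ ρ = LinearMap.id)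
    (m : C →ₗ[k] (A ⊗[k] A →ₗ[k] A))
    (hm : ConvAssoc m) :
    ∀ (n : ℕ) (ν : X →ₗ[k] ((⨂[k] (_ : Fin n), A) →ₗ[k] A)),
      dmidCast ρ m (n + 1) (⟨0, Nat.succ_pos n⟩ : Fin (n + 1)) (d0 ρ m n ν) =
        d0 ρ m (n + 1) (d0 ρ m n ν) := by
  intro n ν
  have hfin : SLR (A := A) (liftL m) n ν ∘ₗ
        LinearMap.lTensor X (Coalgebra.comul : C →ₗ[k] C ⊗[k] C)
      = SLR (A := A) (liftR m) n ν ∘ₗ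
        LinearMap.lTensor X (Coalgebra.comul : C →ₗ[k] C ⊗[k] C) := by
    apply TensorProduct.ext'
    intro y c
    have h := LinearMap.congr_fun (liftL_comul_eq_liftR_comul (A := A) m hm hcocomm) c
    simp only [LinearMap.comp_apply] at h
    simp only [LinearMap.comp_apply, LinearMap.lTensor_tmul, SLR, TensorProduct.lift.tmul,
      LinearMap.mk₂_apply, LinearMap.id_coe, id_eq]
    rw [h]
  rw [claimA, claimB, claimC, claimD]
  simp only [LinearMap.comp_assoc]
  rw [hcoassoc, ← LinearMap.comp_assoc, hfin, LinearMap.comp_assoc]
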